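/- (Theorem 2, full statement) Let K ≥ 2 and J ≥ 1 be integers. The family Q_J of J-class latent class models is identifiable — i.e., for any two models (ν_Q, λ_Q), (ν_R, λ_R) ∈ Q_J, equality of the conditional cell probabilities π̃_{Q,h} = π̃_{R,h} for all h ∈ H* implies π_{Q,0} = π_{R,0} — if and only if 2J ≤ K. -/

import Mathlib

open Finset

/-- The set `H* = {0,1}^K \ {0}` of nonzero binary inclusion patterns. -/
def Hstar (K : ℕ) : Finset (Fin K → Bool) :=
  Finset.univ.filter (fun h => h ≠ fun _ => false)

/-- Cell probability `π_h = Σ_j ν_j ∏_k λ_{jk}^{h_k} (1-λ_{jk})^{1-h_k}` of a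
    `J`-class latent class model. -/
def lcmCellProb {J K : ℕ} (ν : Fin J → ℝ) (lam : Fin J → Fin K → ℝ)
    (h : Fin K → Bool) : ℝ :=
  ∑ j, ν j * ∏ k, (if h k then lam j k else 1 - lam j k)

/-- Missing cell probability `π_0` of a latent class model. -/
def lcmMissProb {J K : ℕ} (ν : Fin J → ℝ) (lam : Fin J → Fin K → ℝ) : ℝ :=
  lcmCellProb ν lam (fun _ => false)

/-- Conditional cell probability `π̃_h = π_h / (1 − π_0)`. -/
noncomputable def lcmCondCellProb {J K : ℕ} (ν : Fin J → ℝ)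
    (lam : Fin J → Fin K → ℝ) (h : Fin K → Bool) : ℝ :=
  lcmCellProb ν lam h / (1 - lcmMissProb ν lam)

/-- Membership in the family `Q_J`: nonnegative weights summing to one, class
    probabilities in `(0,1]`, and coordinatewise distinct class probabilities. -/
def memQJ {J K : ℕ} (ν : Fin J → ℝ) (lam : Fin J → Fin K → ℝ) : Prop :=
  (∀ j, 0 ≤ ν j) ∧ (∑ j, ν j = 1) ∧
    (∀ j k, lam j k ∈ Set.Ioc (0 : ℝ) 1) ∧
    (∀ j j', j ≠ j' → ∀ k, lam j k ≠ lam j' k)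


/-- Key lemma: a sum of at most `K` rank-one multilinear products in `K`
variables can only be constant if that constant is `0`. -/
lemma key_const_zero : ∀ (m K : ℕ), m ≤ K → ∀ (w : Fin m → ℝ)
    (r : Fin m → Fin K → ℝ) (c : ℝ),
    (∀ t : Fin K → ℝ, ∑ i, w i * ∏ k, (t k - r i k) = c) → c = 0 := by
  intro m
  induction m with
  | zero =>
    intro K _ w r c hc
    simpa using (hc (fun _ => 0)).symm
  | succ m ih =>
    intro K hmK w r c hc
    obtain ⟨K', rfl⟩ : ∃ K', K = K' + 1 := by
      cases K with
      | zero => omega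
      | succ n => exact ⟨n, rfl⟩
    set a := r 0 (Fin.last K') with ha
    have hmK' : m ≤ K' := by omega
    apply ih K' hmK' (fun i => w i.succ * (a - r i.succ (Fin.last K')))
      (fun i k => r i.succ k.castSucc) c
    intro t
    have h1 := hc (Fin.snoc t a)
    rw [Fin.sum_univ_succ] at h1
    have hprod : ∀ i : Fin (m+1),
        (∏ k, ((Fin.snoc t a : Fin (K'+1) → ℝ) k - r i k))
          = (∏ k : Fin K', (t k - r i k.castSucc)) * (a - r i (Fin.last K')) := by
      intro i
      rw [Fin.prod_univ_castSucc]
      congr 1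
      · exact Finset.prod_congr rfl (fun k _ => by rw [Fin.snoc_castSucc])
      · rw [Fin.snoc_last]
    rw [hprod 0] at h1
    simp only [sub_self, mul_zero, zero_add, ← ha] at h1
    rw [← h1]
    apply Finset.sum_congr rfl
    intro i _
    rw [hprod i.succ]
    ring

lemma cell_expand {K : ℕ} (lam t : Fin K → ℝ) :
    ∑ h : Fin K → Bool, (∏ k, (if h k then lam k else 1 - lam k))
      * (∏ k, (if h k then t k else 1))
    = ∏ k, ((1 - lam k) + lam k * t k) := by
  have : ∀ k : Fin K, (1 - lam k) + lam k * t k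
      = ∑ b : Bool, (if b then lam k * t k else 1 - lam k) := by
    intro k; simp [Fintype.sum_bool]; ring
  rw [Finset.prod_congr rfl (fun k _ => this k), Fintype.prod_sum]
  apply Finset.sum_congr rfl
  intro h _
  rw [← Finset.prod_mul_distrib]
  apply Finset.prod_congr rfl
  intro k _
  by_cases hk : h k <;> simp [hk]

lemma genfun {J K : ℕ} (ν : Fin J → ℝ) (lam : Fin J → Fin K → ℝ)
    (t : Fin K → ℝ) :
    ∑ h : Fin K → Bool, lcmCellProb ν lam h * ∏ k, (if h k then t k else 1)
    = ∑ j, ν j * ∏ k, ((1 - lam j k) + lam j k * t k) := by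
  unfold lcmCellProb
  simp only [Finset.sum_mul]
  rw [Finset.sum_comm]
  apply Finset.sum_congr rfl
  intro j _
  rw [← cell_expand (lam j) t, Finset.mul_sum]
  apply Finset.sum_congr rfl
  intro h _
  ring

lemma sum_cells {J K : ℕ} (ν : Fin J → ℝ) (lam : Fin J → Fin K → ℝ) :
    ∑ h : Fin K → Bool, lcmCellProb ν lam h = ∑ j, ν j := by
  have := genfun ν lam (fun _ => 1)
  simpa using this

lemma miss_lt_one {J K : ℕ} (hK : 1 ≤ K) (ν : Fin J → ℝ)
    (lam : Fin J → Fin K → ℝ) (hm : memQJ ν lam) : lcmMissProb ν lam < 1 := by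
  obtain ⟨hν, hsum, hlam, _⟩ := hm
  -- each product ∏ (1 - lam j k) is in [0, 1)
  have hp : ∀ j, 0 ≤ ∏ k, (1 - lam j k) ∧ ∏ k, (1 - lam j k) < 1 := by
    intro j
    have h0 : ∀ k, (0:ℝ) ≤ 1 - lam j k := fun k => by
      have := (hlam j k).2; linarith
    have h1 : ∀ k, 1 - lam j k < 1 := fun k => by
      have := (hlam j k).1; linarith
    constructor
    · exact Finset.prod_nonneg (fun k _ => h0 k)
    · obtain ⟨k0⟩ : Nonempty (Fin K) := ⟨⟨0, hK⟩⟩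
      calc ∏ k, (1 - lam j k)
          = (1 - lam j k0) * ∏ k ∈ univ.erase k0, (1 - lam j k) :=
            (Finset.mul_prod_erase univ _ (mem_univ k0)).symm
        _ ≤ (1 - lam j k0) * 1 := by
            apply mul_le_mul_of_nonneg_left _ (h0 k0)
            exact Finset.prod_le_one (fun k _ => h0 k) (fun k _ => by linarith [h1 k, (hlam j k).1])
        _ < 1 := by rw [mul_one]; exact h1 k0
  obtain ⟨j0, hj0⟩ : ∃ j, 0 < ν j := by
    by_contra hno
    push_neg at hno
    have : ∑ j, ν j = 0 := le_antisymm (Finset.sum_nonpos (fun j _ => hno j))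
      (Finset.sum_nonneg (fun j _ => hν j))
    rw [hsum] at this; norm_num at this
  unfold lcmMissProb lcmCellProb
  calc ∑ j, ν j * ∏ k, (if (false:Bool) then lam j k else 1 - lam j k)
      = ∑ j, ν j * ∏ k, (1 - lam j k) := by simp
    _ < ∑ j, ν j := by
        apply Finset.sum_lt_sum
        · intro j _
          calc ν j * ∏ k, (1 - lam j k) ≤ ν j * 1 :=
              mul_le_mul_of_nonneg_left (le_of_lt (hp j).2) (hν j)
            _ = ν j := mul_one _
        · exact ⟨j0, mem_univ _, by
            calc ν j0 * ∏ k, (1 - lam j0 k) < ν j0 * 1 :=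
                mul_lt_mul_of_pos_left (hp j0).2 hj0
              _ = ν j0 := mul_one _⟩
    _ = 1 := hsum


noncomputable def altS (K p : ℕ) : ℝ :=
  ∑ i ∈ range (K+1), (-1:ℝ)^i * (K.choose i) * (i:ℝ)^p

lemma altS_rec (K p : ℕ) :
    altS (K+1) (p+1) = -(K+1) * ∑ q ∈ range (p+1), (p.choose q : ℝ) * altS K q := by
  unfold altS
  rw [Finset.sum_range_succ']
  have h0 : (-1:ℝ)^0 * ((K+1).choose 0 : ℝ) * ((0:ℕ):ℝ)^(p+1) = 0 := by simp
  rw [h0, add_zero]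
  have hterm : ∀ j, (-1:ℝ)^(j+1) * ((K+1).choose (j+1) : ℝ) * ((j+1:ℕ):ℝ)^(p+1)
      = -((K+1:ℝ) * ((-1:ℝ)^j * (K.choose j : ℝ) * ∑ q ∈ range (p+1),
          (p.choose q : ℝ) * (j:ℝ)^q)) := by
    intro j
    have hch : ((K+1) : ℝ) * (K.choose j : ℝ) = ((K+1).choose (j+1) : ℝ) * ((j+1 : ℕ) : ℝ) := by
      have := Nat.add_one_mul_choose_eq K j
      exact_mod_cast congrArg (Nat.cast : ℕ → ℝ) this
    have hbin : ((j+1:ℕ):ℝ)^p = ∑ q ∈ range (p+1), (p.choose q : ℝ) * (j:ℝ)^q := by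
      have := add_pow (j:ℝ) 1 p
      simp only [one_pow, mul_one] at this
      push_cast
      rw [this]
      apply Finset.sum_congr rfl
      intro q _
      ring
    calc (-1:ℝ)^(j+1) * ((K+1).choose (j+1) : ℝ) * ((j+1:ℕ):ℝ)^(p+1)
        = -((-1:ℝ)^j * ((((K+1).choose (j+1) : ℝ)) * ((j+1:ℕ):ℝ)) * ((j+1:ℕ):ℝ)^p) := by
          push_cast; ring
      _ = -((-1:ℝ)^j * ((K+1:ℝ) * (K.choose j : ℝ)) * ((j+1:ℕ):ℝ)^p) := by rw [hch]
      _ = -((K+1:ℝ) * ((-1:ℝ)^j * (K.choose j : ℝ) * ∑ q ∈ range (p+1),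
            (p.choose q : ℝ) * (j:ℝ)^q)) := by rw [hbin]; ring
  rw [Finset.sum_congr rfl (fun j _ => hterm j)]
  rw [Finset.sum_neg_distrib, ← Finset.mul_sum, neg_mul]
  congr 1
  congr 1
  have step1 : ∀ i ∈ range (K+1), (-1:ℝ)^i * (K.choose i : ℝ) * ∑ q ∈ range (p+1), (p.choose q : ℝ) * (i:ℝ)^q
      = ∑ q ∈ range (p+1), (p.choose q : ℝ) * ((-1:ℝ)^i * (K.choose i : ℝ) * (i:ℝ)^q) := by
    intro i _
    rw [Finset.mul_sum]
    apply Finset.sum_congr rfl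
    intro q _
    ring
  rw [Finset.sum_congr rfl step1, Finset.sum_comm]
  apply Finset.sum_congr rfl
  intro q _
  rw [Finset.mul_sum]

lemma altS_zero : ∀ K p, p < K → altS K p = 0 := by
  intro K
  induction K with
  | zero => intro p hp; omega
  | succ K ih =>
    intro p hp
    cases p with
    | zero =>
      unfold altS
      have := @Int.alternating_sum_range_choose (K+1)
      rw [if_neg (by omega)] at this
      have : ((∑ i ∈ range (K+1+1), (-1:ℤ)^i * ((K+1).choose i) : ℤ) : ℝ) = 0 := by
        rw [this]; norm_num
      push_cast at this
      rw [← this]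
      apply Finset.sum_congr rfl
      intro i _
      rw [pow_zero, mul_one]
    | succ p =>
      rw [altS_rec]
      have : ∀ q ∈ range (p+1), (p.choose q : ℝ) * altS K q = 0 := by
        intro q hq
        rw [ih q (by simp at hq; omega), mul_zero]
      rw [Finset.sum_congr rfl this, Finset.sum_const, smul_zero, mul_zero]

lemma altS_top : ∀ K, altS K K = (-1:ℝ)^K * (K.factorial : ℝ) := by
  intro K
  induction K with
  | zero => unfold altS; simp
  | succ K ih =>
    rw [altS_rec, Finset.sum_range_succ]
    have : ∀ q ∈ range K, (K.choose q : ℝ) * altS K q = 0 := by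
      intro q hq
      rw [altS_zero K q (by simpa using hq), mul_zero]
    rw [Finset.sum_congr rfl this, Finset.sum_const, smul_zero, zero_add,
      Nat.choose_self, ih]
    push_cast [Nat.factorial_succ]
    ring

/-- number of `true` coordinates of a pattern -/
def sOf {K : ℕ} (h : Fin K → Bool) : ℕ := (univ.filter (fun k => h k = true)).card

lemma sOf_le {K : ℕ} (h : Fin K → Bool) : sOf h ≤ K := by
  classical
  calc sOf h ≤ (univ : Finset (Fin K)).card := Finset.card_filter_le _ _
    _ = K := by simp

lemma sOf_pos {K : ℕ} (h : Fin K → Bool) (hh : h ≠ fun _ => false) : 1 ≤ sOf h := by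
  classical
  rw [Nat.one_le_iff_ne_zero]
  intro h0
  apply hh
  funext k
  by_contra hk
  have hk' : h k = true := by
    cases hkk : h k
    · exact absurd hkk hk
    · rfl
  have hmem : k ∈ univ.filter (fun k => h k = true) := by simp [hk']
  have : (univ.filter (fun k : Fin K => h k = true)) = ∅ := Finset.card_eq_zero.mp h0
  rw [this] at hmem
  simp at hmem

lemma cell_const {K : ℕ} (a : ℝ) (h : Fin K → Bool) :
    ∏ k, (if h k then a else 1 - a) = a ^ sOf h * (1-a) ^ (K - sOf h) := by
  classical
  rw [Finset.prod_ite]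
  rw [Finset.prod_const, Finset.prod_const]
  congr 1
  have := Finset.card_filter_add_card_filter_not
    (s := (univ : Finset (Fin K))) (p := fun k => h k = true)
  simp only [Finset.card_univ, Fintype.card_fin] at this
  unfold sOf
  congr 1
  omega

lemma cell_node (K i s : ℕ) (hs : s ≤ K) :
    (1/((i:ℝ)+1))^s * (1 - 1/((i:ℝ)+1))^(K - s) = (i:ℝ)^(K-s) / ((i:ℝ)+1)^K := by
  have hi : ((i:ℝ)+1) ≠ 0 := by positivity
  have h2 : 1 - 1/((i:ℝ)+1) = (i:ℝ)/((i:ℝ)+1) := by field_simp; ring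
  rw [h2, div_pow, div_pow, one_pow, div_mul_div_comm, one_mul, ← pow_add]
  congr 2
  omega

lemma sum_range_two_mul (g : ℕ → ℝ) (n : ℕ) :
    ∑ i ∈ range (2*n), g i = ∑ j ∈ range n, (g (2*j) + g (2*j+1)) := by
  induction n with
  | zero => simp
  | succ n ih =>
    have : 2*(n+1) = (2*n+1)+1 := by ring
    rw [this, Finset.sum_range_succ, Finset.sum_range_succ, ih,
      Finset.sum_range_succ]
    ring

lemma counterexample {K J : ℕ} (hK : 2 ≤ K) (hJ : 1 ≤ J) (hlt : K < 2*J) :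
    ∃ (νQ νR : Fin J → ℝ) (lamQ lamR : Fin J → Fin K → ℝ),
      memQJ νQ lamQ ∧ memQJ νR lamR ∧
      (∀ h ∈ Hstar K, lcmCondCellProb νQ lamQ h = lcmCondCellProb νR lamR h) ∧
      lcmMissProb νQ lamQ ≠ lcmMissProb νR lamR := by
  classical
  set W : ℕ → ℝ := fun i => if i ≤ K then (K.choose i : ℝ) * ((i:ℝ)+1)^K else 0 with hW
  have hWnn : ∀ i, 0 ≤ W i := by
    intro i
    rw [hW]
    dsimp only
    split
    · positivity
    · exact le_refl 0
  set U : ℝ := ∑ j : Fin J, W (2*(j:ℕ)) with hU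
  set V : ℝ := ∑ j : Fin J, W (2*(j:ℕ)+1) with hV
  have hW0 : W 0 = 1 := by rw [hW]; simp
  have hW1 : 0 < W 1 := by
    rw [hW]
    simp only [if_pos (by omega : 1 ≤ K), Nat.choose_one_right]
    have : (0:ℝ) < (K:ℝ) := by exact_mod_cast (by omega : 0 < K)
    positivity
  have hUpos : 0 < U := by
    rw [hU]
    have hle : W (2*((⟨0, by omega⟩ : Fin J):ℕ)) ≤ ∑ j : Fin J, W (2*(j:ℕ)) :=
      Finset.single_le_sum (f := fun j : Fin J => W (2*(j:ℕ)))
        (fun j _ => hWnn _) (mem_univ (⟨0, by omega⟩ : Fin J))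
    simp only [Fin.val_mk, Nat.mul_zero, hW0] at hle
    linarith
  have hVpos : 0 < V := by
    rw [hV]
    have hle : W (2*((⟨0, by omega⟩ : Fin J):ℕ)+1) ≤ ∑ j : Fin J, W (2*(j:ℕ)+1) :=
      Finset.single_le_sum (f := fun j : Fin J => W (2*(j:ℕ)+1))
        (fun j _ => hWnn _) (mem_univ (⟨0, by omega⟩ : Fin J))
    simp only [Fin.val_mk, Nat.mul_zero, Nat.zero_add] at hle
    linarith
  set νQ : Fin J → ℝ := fun j => W (2*(j:ℕ)) / U with hνQ
  set νR : Fin J → ℝ := fun j => W (2*(j:ℕ)+1) / V with hνR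
  set lamQ : Fin J → Fin K → ℝ := fun j _ => 1 / ((((2*(j:ℕ) : ℕ)) : ℝ) + 1) with hlamQ
  set lamR : Fin J → Fin K → ℝ := fun j _ => 1 / ((((2*(j:ℕ)+1 : ℕ)) : ℝ) + 1) with hlamR
  have hmemQ : memQJ νQ lamQ := by
    refine ⟨fun j => div_nonneg (hWnn _) hUpos.le, ?_, ?_, ?_⟩
    · rw [hνQ]; dsimp only; rw [← Finset.sum_div, ← hU]; exact div_self (ne_of_gt hUpos)
    · intro j k
      constructor
      · positivity
      · rw [div_le_one (by positivity)]
        have : (0:ℝ) ≤ ((2*(j:ℕ) : ℕ):ℝ) := Nat.cast_nonneg _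
        linarith
    · intro j j' hne k heq
      apply hne
      rw [hlamQ] at heq
      simp only [one_div] at heq
      rw [inv_inj] at heq
      have : (2*(j:ℕ) : ℕ) = (2*(j':ℕ) : ℕ) := by exact_mod_cast (by linarith : (((2*(j:ℕ) : ℕ)):ℝ) = ((2*(j':ℕ) : ℕ):ℝ))
      rw [Fin.ext_iff]; omega
  have hmemR : memQJ νR lamR := by
    refine ⟨fun j => div_nonneg (hWnn _) hVpos.le, ?_, ?_, ?_⟩
    · rw [hνR]; dsimp only; rw [← Finset.sum_div, ← hV]; exact div_self (ne_of_gt hVpos)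
    · intro j k
      constructor
      · positivity
      · rw [div_le_one (by positivity)]
        have : (0:ℝ) ≤ ((2*(j:ℕ)+1 : ℕ):ℝ) := Nat.cast_nonneg _
        linarith
    · intro j j' hne k heq
      apply hne
      rw [hlamR] at heq
      simp only [one_div] at heq
      rw [inv_inj] at heq
      have : (2*(j:ℕ)+1 : ℕ) = (2*(j':ℕ)+1 : ℕ) := by exact_mod_cast (by linarith : (((2*(j:ℕ)+1 : ℕ)):ℝ) = ((2*(j':ℕ)+1 : ℕ):ℝ))
      rw [Fin.ext_iff]; omega
  -- the key alternating-sum identity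
  have keyid : ∀ h : Fin K → Bool,
      U * lcmCellProb νQ lamQ h - V * lcmCellProb νR lamR h = altS K (K - sOf h) := by
    intro h
    set s := sOf h with hs
    set Gs : ℕ → ℝ := fun i => if i ≤ K then (K.choose i : ℝ) * (i:ℝ)^(K - s) else 0 with hGs
    have hWG : ∀ i : ℕ, W i * ((i:ℝ)^(K-s) / ((i:ℝ)+1)^K) = Gs i := by
      intro i
      rw [hW, hGs]
      dsimp only
      split
      · have hne : ((i:ℝ)+1)^K ≠ 0 := by positivity
        field_simp
      · exact zero_mul _
    have hcellQ : ∀ j : Fin J, (∏ k, (if h k then lamQ j k else 1 - lamQ j k))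
        = ((2*(j:ℕ) : ℕ):ℝ)^(K-s) / (((2*(j:ℕ) : ℕ):ℝ)+1)^K := by
      intro j
      rw [hlamQ]
      dsimp only
      rw [cell_const, ← hs, cell_node K (2*(j:ℕ)) s (hs ▸ sOf_le h)]
    have hcellR : ∀ j : Fin J, (∏ k, (if h k then lamR j k else 1 - lamR j k))
        = ((2*(j:ℕ)+1 : ℕ):ℝ)^(K-s) / (((2*(j:ℕ)+1 : ℕ):ℝ)+1)^K := by
      intro j
      rw [hlamR]
      dsimp only
      rw [cell_const, ← hs, cell_node K (2*(j:ℕ)+1) s (hs ▸ sOf_le h)]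
    have hQsum : U * lcmCellProb νQ lamQ h = ∑ j : Fin J, Gs (2*(j:ℕ)) := by
      unfold lcmCellProb
      rw [Finset.mul_sum]
      apply Finset.sum_congr rfl
      intro j _
      rw [hcellQ j, hνQ]
      dsimp only
      rw [← hWG (2*(j:ℕ))]
      field_simp
    have hRsum : V * lcmCellProb νR lamR h = ∑ j : Fin J, Gs (2*(j:ℕ)+1) := by
      unfold lcmCellProb
      rw [Finset.mul_sum]
      apply Finset.sum_congr rfl
      intro j _
      rw [hcellR j, hνR]
      dsimp only
      rw [← hWG (2*(j:ℕ)+1)]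
      field_simp
    rw [hQsum, hRsum, ← Finset.sum_sub_distrib]
    have hpair : ∑ j : Fin J, (Gs (2*(j:ℕ)) - Gs (2*(j:ℕ)+1))
        = ∑ i ∈ range (2*J), (-1:ℝ)^i * Gs i := by
      rw [sum_range_two_mul (fun i => (-1:ℝ)^i * Gs i) J]
      rw [Fin.sum_univ_eq_sum_range (fun j => Gs (2*j) - Gs (2*j+1)) J]
      apply Finset.sum_congr rfl
      intro j _
      have he : (-1:ℝ)^(2*j) = 1 := by
        rw [pow_mul]; norm_num
      have ho : (-1:ℝ)^(2*j+1) = -1 := by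
        rw [pow_succ, pow_mul]; norm_num
      rw [he, ho]; ring
    rw [hpair]
    have hsub : ∑ i ∈ range (2*J), (-1:ℝ)^i * Gs i
        = ∑ i ∈ range (K+1), (-1:ℝ)^i * Gs i := by
      symm
      apply Finset.sum_subset (Finset.range_subset_range.mpr (by omega))
      intro i _ hnot
      have : ¬ i ≤ K := by
        simp only [Finset.mem_range] at hnot; omega
      rw [hGs]; dsimp only; rw [if_neg this, mul_zero]
    rw [hsub]
    unfold altS
    apply Finset.sum_congr rfl
    intro i hi
    have : i ≤ K := by simp only [Finset.mem_range] at hi; omega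
    rw [hGs]; dsimp only; rw [if_pos this]; ring
  set mQ := lcmMissProb νQ lamQ with hmQ
  set mR := lcmMissProb νR lamR with hmR
  have hmQ1 : mQ < 1 := miss_lt_one (by omega) νQ lamQ hmemQ
  have hmR1 : mR < 1 := miss_lt_one (by omega) νR lamR hmemR
  have hzero : ∀ h ∈ Hstar K, U * lcmCellProb νQ lamQ h = V * lcmCellProb νR lamR h := by
    intro h hh
    have hne : h ≠ fun _ => false := by
      simp only [Hstar, Finset.mem_filter] at hh; exact hh.2
    have h1 := keyid h
    rw [altS_zero K (K - sOf h) (by have := sOf_pos h hne; have := sOf_le h; omega)] at h1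
    linarith
  have hmiss : U * mQ - V * mR = (-1:ℝ)^K * (K.factorial : ℝ) := by
    have h1 := keyid (fun _ => false)
    have hs0 : sOf (fun _ : Fin K => false) = 0 := by unfold sOf; simp
    rw [hs0, Nat.sub_zero, altS_top] at h1
    exact h1
  -- total mass over Hstar
  have hsplit : ∀ (ν : Fin J → ℝ) (lam : Fin J → Fin K → ℝ),
      (∑ j, ν j = 1) → ∑ h ∈ Hstar K, lcmCellProb ν lam h = 1 - lcmMissProb ν lam := by
    intro ν lam hn
    have htot : ∑ h : Fin K → Bool, lcmCellProb ν lam h = 1 := by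
      rw [sum_cells ν lam, hn]
    have : Hstar K = Finset.univ.erase (fun _ => false) := Finset.filter_ne' _ _
    rw [this]
    have := Finset.add_sum_erase Finset.univ (lcmCellProb ν lam)
      (Finset.mem_univ (fun _ : Fin K => false))
    rw [htot] at this
    unfold lcmMissProb
    linarith
  have halpha : U * (1 - mQ) = V * (1 - mR) := by
    rw [← hsplit νQ lamQ hmemQ.2.1, ← hsplit νR lamR hmemR.2.1,
      Finset.mul_sum, Finset.mul_sum]
    exact Finset.sum_congr rfl (fun h hh => hzero h hh)
  refine ⟨νQ, νR, lamQ, lamR, hmemQ, hmemR, ?_, ?_⟩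
  · intro h hh
    unfold lcmCondCellProb
    rw [← hmQ, ← hmR, div_eq_div_iff (by linarith) (by linarith)]
    have hmul : U * (lcmCellProb νQ lamQ h * (1 - mR)) = U * (lcmCellProb νR lamR h * (1 - mQ)) := by
      calc U * (lcmCellProb νQ lamQ h * (1 - mR))
          = (U * lcmCellProb νQ lamQ h) * (1 - mR) := by ring
        _ = (V * lcmCellProb νR lamR h) * (1 - mR) := by rw [hzero h hh]
        _ = lcmCellProb νR lamR h * (V * (1 - mR)) := by ring
        _ = lcmCellProb νR lamR h * (U * (1 - mQ)) := by rw [← halpha]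
        _ = U * (lcmCellProb νR lamR h * (1 - mQ)) := by ring
    exact mul_left_cancel₀ (ne_of_gt hUpos) hmul
  · intro heq
    rw [← hmQ, ← hmR] at heq
    rw [heq] at halpha hmiss
    have hUV : U = V := by
      have h1 : (1:ℝ) - mR ≠ 0 := by linarith
      exact mul_right_cancel₀ h1 halpha
    rw [hUV] at hmiss
    have hKfac : ((-1:ℝ)^K * (K.factorial : ℝ)) ≠ 0 := by
      apply mul_ne_zero
      · exact pow_ne_zero _ (by norm_num)
      · exact_mod_cast K.factorial_ne_zero
    apply hKfac
    linarith

lemma identifiable_of_le {K J : ℕ} (hK : 1 ≤ K) (h2J : 2 * J ≤ K)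
    (νQ νR : Fin J → ℝ) (lamQ lamR : Fin J → Fin K → ℝ)
    (hQ : memQJ νQ lamQ) (hR : memQJ νR lamR)
    (hcond : ∀ h ∈ Hstar K, lcmCondCellProb νQ lamQ h = lcmCondCellProb νR lamR h) :
    lcmMissProb νQ lamQ = lcmMissProb νR lamR := by
  set mQ := lcmMissProb νQ lamQ with hmQ
  set mR := lcmMissProb νR lamR with hmR
  have huQ : (0:ℝ) < 1 - mQ := by
    have := miss_lt_one hK νQ lamQ hQ; linarith
  have huR : (0:ℝ) < 1 - mR := by
    have := miss_lt_one hK νR lamR hR; linarith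
  set c := (1 - mQ) / (1 - mR) with hc
  have hcuR : c * (1 - mR) = 1 - mQ := by
    rw [hc, div_mul_cancel₀ _ (ne_of_gt huR)]
  have hprop : ∀ h, h ≠ (fun _ => false) →
      lcmCellProb νQ lamQ h - c * lcmCellProb νR lamR h = 0 := by
    intro h hh
    have := hcond h (by simp [Hstar, hh])
    unfold lcmCondCellProb at this
    rw [← hmQ, ← hmR] at this
    rw [div_eq_div_iff (by linarith) (by linarith)] at this
    rw [hc]
    field_simp
    linarith [this]
  set d := mQ - c * mR with hd
  have hkey : ∀ t : Fin K → ℝ,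
      ∑ i : Fin (J + J),
        (Fin.append (fun j => νQ j * ∏ k, lamQ j k)
          (fun j => -(c * (νR j * ∏ k, lamR j k))) i)
        * ∏ k, (t k -
          (Fin.append (fun j k => (lamQ j k - 1) / lamQ j k)
            (fun j k => (lamR j k - 1) / lamR j k) i) k) = d := by
    intro t
    rw [Fin.sum_univ_add]
    have hterm : ∀ (ν : Fin J → ℝ) (lam : Fin J → Fin K → ℝ)
        (hpos : ∀ j k, lam j k ∈ Set.Ioc (0:ℝ) 1) (j : Fin J),
        (ν j * ∏ k, lam j k) * ∏ k, (t k - (lam j k - 1) / lam j k)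
          = ν j * ∏ k, ((1 - lam j k) + lam j k * t k) := by
      intro ν lam hpos j
      rw [mul_assoc, ← Finset.prod_mul_distrib]
      congr 1
      apply Finset.prod_congr rfl
      intro k _
      have h0 : lam j k ≠ 0 := ne_of_gt (hpos j k).1
      field_simp
      ring
    have h1 : ∑ i : Fin J,
        (Fin.append (fun j => νQ j * ∏ k, lamQ j k)
          (fun j => -(c * (νR j * ∏ k, lamR j k))) (Fin.castAdd J i))
        * ∏ k, (t k -
          (Fin.append (fun j k => (lamQ j k - 1) / lamQ j k)
            (fun j k => (lamR j k - 1) / lamR j k) (Fin.castAdd J i)) k)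
        = ∑ j, νQ j * ∏ k, ((1 - lamQ j k) + lamQ j k * t k) := by
      apply Finset.sum_congr rfl
      intro i _
      rw [Fin.append_left, Fin.append_left]
      exact hterm νQ lamQ hQ.2.2.1 i
    have h2 : ∑ i : Fin J,
        (Fin.append (fun j => νQ j * ∏ k, lamQ j k)
          (fun j => -(c * (νR j * ∏ k, lamR j k))) (Fin.natAdd J i))
        * ∏ k, (t k -
          (Fin.append (fun j k => (lamQ j k - 1) / lamQ j k)
            (fun j k => (lamR j k - 1) / lamR j k) (Fin.natAdd J i)) k)
        = ∑ j, -(c * (νR j * ∏ k, ((1 - lamR j k) + lamR j k * t k))) := by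
      apply Finset.sum_congr rfl
      intro i _
      rw [Fin.append_right, Fin.append_right]
      have := hterm νR lamR hR.2.2.1 i
      calc -(c * (νR i * ∏ k, lamR i k)) * ∏ k, (t k - (lamR i k - 1) / lamR i k)
          = -(c * ((νR i * ∏ k, lamR i k) * ∏ k, (t k - (lamR i k - 1) / lamR i k))) := by ring
        _ = -(c * (νR i * ∏ k, ((1 - lamR i k) + lamR i k * t k))) := by rw [this]
    rw [h1, h2]
    have h3 : ∑ j, -(c * (νR j * ∏ k, ((1 - lamR j k) + lamR j k * t k)))
        = -(c * ∑ j, νR j * ∏ k, ((1 - lamR j k) + lamR j k * t k)) := by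
      rw [Finset.mul_sum, ← Finset.sum_neg_distrib]
    rw [h3, ← genfun νQ lamQ t, ← genfun νR lamR t]
    have h4 : (∑ h : Fin K → Bool, lcmCellProb νQ lamQ h * ∏ k, (if h k then t k else 1))
        + -(c * ∑ h : Fin K → Bool, lcmCellProb νR lamR h * ∏ k, (if h k then t k else 1))
        = ∑ h : Fin K → Bool,
            (lcmCellProb νQ lamQ h - c * lcmCellProb νR lamR h) * ∏ k, (if h k then t k else 1) := by
      rw [Finset.mul_sum, ← Finset.sum_neg_distrib, ← Finset.sum_add_distrib]
      apply Finset.sum_congr rfl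
      intro h _
      ring
    rw [h4]
    rw [Finset.sum_eq_single_of_mem (fun _ => false) (mem_univ _)
      (fun b _ hb => by rw [hprop b hb, zero_mul])]
    simp [hd, hmQ, hmR, lcmMissProb]
  have hd0 : d = 0 := key_const_zero (J + J) K (by omega) _ _ d hkey
  have : mQ = c * mR := by rw [hd] at hd0; linarith
  have hc1 : c = 1 := by
    have := hcuR
    nlinarith [this]
  rw [hc1] at hcuR
  linarith

/-- Theorem 2: the family `Q_J` of `J`-class latent class models
    is identifiable if and only if `2J ≤ K`. -/
theorem lcm_identifiable_iff (K J : ℕ) (hK : 2 ≤ K) (hJ : 1 ≤ J) :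
    (∀ (νQ νR : Fin J → ℝ) (lamQ lamR : Fin J → Fin K → ℝ),
        memQJ νQ lamQ → memQJ νR lamR →
        (∀ h ∈ Hstar K, lcmCondCellProb νQ lamQ h = lcmCondCellProb νR lamR h) →
        lcmMissProb νQ lamQ = lcmMissProb νR lamR) ↔
    2 * J ≤ K := by
  constructor
  · intro hid
    by_contra hnot
    obtain ⟨νQ, νR, lamQ, lamR, hQ, hR, hcond, hne⟩ :=
      counterexample hK hJ (by omega)
    exact hne (hid νQ νR lamQ lamR hQ hR hcond)
  · intro h2J νQ νR lamQ lamR hQ hR hcond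
    exact identifiable_of_le (by omega) h2J νQ νR lamQ lamR hQ hR hcond
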